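/- Let n ≥ 1 and consider finitely many indices i = 1,…,n. For each i let a_i ∈ ℝ and q_i ∈ ℝ with q_i > 0, and let α ∈ ℝ satisfy |a_i| < α for every i. Define the robustness margin R̄ = min_{i=1,…,n} (α + a_i)/q_i. Then R̄ > 0, and for every δ ≥ 0 the following equivalence holds: max_{i=1,…,n} |a_i − δ·q_i| < α if and only if δ < R̄. (Equivalently: there exists an index i with |a_i − δ·q_i| ≥ α if and only if δ ≥ R̄.) -/

import Mathlib

/-- robustness margin characterization. -/
theorem stmt0 (n : ℕ) (hn : 0 < n) (a q : Fin n → ℝ) (hq : ∀ i, 0 < q i)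
    (α : ℝ) (ha : ∀ i, |a i| < α) :
    0 < Finset.univ.inf' ⟨⟨0, hn⟩, Finset.mem_univ _⟩ (fun i => (α + a i) / q i) ∧
    ∀ δ : ℝ, 0 ≤ δ →
      (((∀ i, |a i - δ * q i| < α) ↔
          δ < Finset.univ.inf' ⟨⟨0, hn⟩, Finset.mem_univ _⟩ (fun i => (α + a i) / q i)) ∧
        ((∃ i, α ≤ |a i - δ * q i|) ↔
          Finset.univ.inf' ⟨⟨0, hn⟩, Finset.mem_univ _⟩ (fun i => (α + a i) / q i) ≤ δ)) := by
  have key : ∀ (δ : ℝ), 0 ≤ δ → ∀ i, (|a i - δ * q i| < α ↔ δ < (α + a i) / q i) := by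
    intro δ hδ i
    have hqi := hq i
    have hai := abs_lt.mp (ha i)
    rw [abs_lt, lt_div_iff₀ hqi]
    constructor
    · rintro ⟨h1, _⟩; linarith
    · intro h; constructor
      · linarith
      · nlinarith [mul_nonneg hδ hqi.le]
  constructor
  · erw [Finset.lt_inf'_iff]
    intro i _
    have hai := abs_lt.mp (ha i)
    exact div_pos (by linarith) (hq i)
  · intro δ hδ
    have h1 : (∀ i, |a i - δ * q i| < α) ↔
        δ < Finset.univ.inf' ⟨⟨0, hn⟩, Finset.mem_univ _⟩ (fun i => (α + a i) / q i) := by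
      erw [Finset.lt_inf'_iff]
      constructor
      · intro h i _; exact (key δ hδ i).mp (h i)
      · intro h i; exact (key δ hδ i).mpr (h i (Finset.mem_univ i))
    refine ⟨h1, ?_⟩
    rw [← not_lt, ← h1, not_forall]
    exact exists_congr fun i => not_lt.symm
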